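/- Fix t ≥ 1 and 0 ≤ p ≤ 1, set q = (1−p)/2, and for r ≥ 1 let P_0(r) (resp. P_1(r)) be the probability that Ξ_t(r)|_ρ is the identically-0 (resp. identically-1) function under a random p-restriction ρ. Then for every r ≥ 2, writing U = P_1(r−1) and V = P_0(r−1): P_0(r) = q·U·∑_{k=0}^{t−1} (q + p·U)^k + (q + p·U)^t, and P_1(r) = q·V·∑_{k=0}^{t−1} (q + p·V)^k. -/

import Mathlib

/-! ## Decision trees -/

/-- Binary decision trees over a variable index type `ι`.  An internal vertex
`node i t0 t1` queries variable `i`; the `0`-edge leads to `t0`, the `1`-edge to `t1`. -/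
inductive DTree (ι : Type) : Type where
  | leaf : Bool → DTree ι
  | node : ι → DTree ι → DTree ι → DTree ι

namespace DTree

variable {ι : Type}

/-- Evaluate a decision tree on an input. -/
def eval : DTree ι → (ι → Bool) → Bool
  | leaf b, _ => b
  | node i t0 t1, x => if x i then t1.eval x else t0.eval x

/-- Depth: the number of edges on the longest root-to-leaf path. -/
def depth : DTree ι → ℕ
  | leaf _ => 0
  | node _ t0 t1 => max t0.depth t1.depth + 1

/-- Distance from the root to the closest leaf. -/
def minLeafDepth : DTree ι → ℕ
  | leaf _ => 0
  | node _ t0 t1 => min t0.minLeafDepth t1.minLeafDepth + 1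

/-- A tree is `t`-clipped if every vertex is within distance `t` of some leaf. -/
def Clipped (t : ℕ) : DTree ι → Prop
  | leaf _ => True
  | node _ t0 t1 =>
      min t0.minLeafDepth t1.minLeafDepth + 1 ≤ t ∧ Clipped t t0 ∧ Clipped t t1

/-- No variable in `seen` (nor any variable already queried above) is queried again:
this captures "no variable appears more than once on any root-to-leaf path". -/
def ReadOnceFrom : List ι → DTree ι → Prop
  | _, leaf _ => True
  | seen, node i t0 t1 =>
      i ∉ seen ∧ ReadOnceFrom (i :: seen) t0 ∧ ReadOnceFrom (i :: seen) t1

/-- No variable appears more than once on any root-to-leaf path. -/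
def ReadOnce (T : DTree ι) : Prop := T.ReadOnceFrom []

/-- `T` computes the boolean function `f`. -/
def Computes (T : DTree ι) (f : (ι → Bool) → Bool) : Prop := ∀ x, T.eval x = f x

/-- The list of all variables labelling internal vertices of the tree. -/
def nodeVars : DTree ι → List ι
  | leaf _ => []
  | node i t0 t1 => i :: (t0.nodeVars ++ t1.nodeVars)

/-- The tree has some leaf labelled `b`. -/
def HasLeaf (b : Bool) : DTree ι → Prop
  | leaf c => c = b
  | node _ t0 t1 => HasLeaf b t0 ∨ HasLeaf b t1

/-- From every internal vertex there is a path to a leaf labelled 0 (`false`)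
and a path to a leaf labelled 1 (`true`). -/
def EverySplit : DTree ι → Prop
  | leaf _ => True
  | node _ t0 t1 =>
      (HasLeaf true t0 ∨ HasLeaf true t1) ∧ (HasLeaf false t0 ∨ HasLeaf false t1) ∧
        EverySplit t0 ∧ EverySplit t1

/-- Variable `y` labels some internal vertex at distance `d` (edges) from the root. -/
def OccursAt (y : ι) : ℕ → DTree ι → Prop
  | _, leaf _ => False
  | 0, node i _ _ => i = y
  | d + 1, node _ t0 t1 => OccursAt y d t0 ∨ OccursAt y d t1

end DTree

/-- `DTdepth f` is the minimum depth of a decision tree computing `f`. -/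
noncomputable def DTdepth {ι : Type} (f : (ι → Bool) → Bool) : ℕ :=
  sInf {d | ∃ T : DTree ι, T.ReadOnce ∧ T.Computes f ∧ T.depth ≤ d}

/-! ## Restrictions -/

/-- The function obtained by fixing each variable `i` with `ρ i = some b` to `b`
(variables with `ρ i = none`, i.e. assigned `*`, are left free). -/
def restrictFun {ι : Type} (f : (ι → Bool) → Bool) (ρ : ι → Option Bool) :
    (ι → Bool) → Bool :=
  fun x => f (fun i => (ρ i).getD (x i))

open Classical in
/-- The probability of the event `E` under a random `p`-restriction: each variable
independently gets `*` (i.e. `none`) with probability `p`, and each of the values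
`0`, `1` with probability `(1-p)/2`. -/
noncomputable def restrProb {ι : Type} [Fintype ι] [DecidableEq ι] (p : ℝ)
    (E : (ι → Option Bool) → Prop) : ℝ :=
  ∑ ρ : ι → Option Bool,
    (if E ρ then ∏ i : ι, (if ρ i = none then p else (1 - p) / 2) else 0)

/-! ## Tree tribes -/

/-- The variable index type of the complete `t`-clipped tree `W_t(r)` on `r` levels:
the first block `v_1, …, v_t`, plus, for each `k < t`, a fresh copy of the variables
of `W_t(r-1)` hanging off the 1-edge of `v_{k+1}`. -/
def XiVars (t : ℕ) : ℕ → Type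
  | 0 => Empty
  | r + 1 => Fin t ⊕ (Fin t × XiVars t r)

instance XiVars.instFintype (t : ℕ) : ∀ r, Fintype (XiVars t r)
  | 0 => inferInstanceAs (Fintype Empty)
  | r + 1 =>
      letI := XiVars.instFintype t r
      inferInstanceAs (Fintype (Fin t ⊕ (Fin t × XiVars t r)))

instance XiVars.instDecidableEq (t : ℕ) : ∀ r, DecidableEq (XiVars t r)
  | 0 => inferInstanceAs (DecidableEq Empty)
  | r + 1 =>
      letI := XiVars.instDecidableEq t r
      inferInstanceAs (DecidableEq (Fin t ⊕ (Fin t × XiVars t r)))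

/-- The `t`-clipped xor tree tribe `Ξ_t(r)`: the function computed by `W_t(r)` with
each leaf labelled by the parity of the edge labels on its root-to-leaf path.
Following the 0-edges `v_1 → v_2 → ⋯` until the first variable with value 1 (if any),
whose 1-edge leads to a fresh copy computing the negation of `Ξ_t(r-1)`. -/
def Xi (t : ℕ) : ∀ r, (XiVars t r → Bool) → Bool
  | 0, _ => false
  | r + 1, x =>
      match (List.finRange t).find? (fun i => x (Sum.inl i)) with
      | none => false
      | some k => ! Xi t r (fun v => x (Sum.inr (k, v)))

namespace XiVars

/-- The list of 1-branch positions (0-indexed within each block) taken on the path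
from the root to the block containing the given variable. -/
def branches {t : ℕ} : ∀ {r : ℕ}, XiVars t r → List (Fin t)
  | 0, v => nomatch v
  | _ + 1, Sum.inl _ => []
  | _ + 1, Sum.inr (k, w) => k :: branches w

/-- The (0-indexed) position of the variable within its block. -/
def pos {t : ℕ} : ∀ {r : ℕ}, XiVars t r → Fin t
  | 0, v => nomatch v
  | _ + 1, Sum.inl i => i
  | _ + 1, Sum.inr (_, w) => pos w

/-- The level of a variable: the recursive step at which it was added (level 1 is the
outermost block). -/
def level {t r : ℕ} (v : XiVars t r) : ℕ := (branches v).length + 1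

/-- The distance (number of edges) from the root of `W_t(r)` to the vertex of `v`. -/
def rootDist {t r : ℕ} (v : XiVars t r) : ℕ :=
  ((branches v).map (fun b => (b : ℕ) + 1)).sum + (pos v : ℕ)

/-- The distance from the vertex of `v` to the closest leaf of `W_t(r)`. -/
def leafDist {t r : ℕ} (v : XiVars t r) : ℕ :=
  min (t - (pos v : ℕ)) (1 + min t (r - level v))

/-- A root-to-leaf path of `W_t(r)` is determined by the list `L` of 1-branch positions
it takes (with `L.length ≤ r`); `v.onPath L` says the vertex of `v` lies on that path. -/
def onPath {t r : ℕ} (v : XiVars t r) (L : List (Fin t)) : Prop :=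
  branches v = L ∨
    (branches v <+: L ∧ branches v ≠ L ∧
      ∃ b : Fin t, L[(branches v).length]? = some b ∧ pos v ≤ b)

end XiVars

/-- For `t = 1`, `Ξ_1(n)` is computed by a path on `n` variables: vertex `x_i` has a
0-edge to a leaf and a 1-edge to `x_{i+1}`, leaves labelled by the parity of the edge
labels from the root. -/
def Xi1 : ∀ n, (Fin n → Bool) → Bool
  | 0, _ => false
  | n + 1, x => if x 0 then ! Xi1 n (fun i => x i.succ) else false

/-! ## Fourier coefficients -/

/-- The Fourier coefficient `f̂_S` of a boolean function, viewed as a function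
`{−1,1}^n → {−1,1}` via the identification `false ↔ +1`, `true ↔ −1`:
`f̂_S = E_x[f(x) ∏_{i ∈ S} x_i]` over a uniformly random input. -/
noncomputable def fourierCoeffB {ι : Type} [Fintype ι] [DecidableEq ι]
    (f : (ι → Bool) → Bool) (S : Finset ι) : ℝ :=
  (∑ x : ι → Bool,
      (if f x then (-1 : ℝ) else 1) * ∏ i ∈ S, (if x i then (-1 : ℝ) else 1)) /
    2 ^ Fintype.card ι

/-- The `i`-th Jacobsthal number `J_i = (2^i − (−1)^i)/3`, as a real number. -/
noncomputable def jacobsthal (i : ℕ) : ℝ := (2 ^ i - (-1) ^ i) / 3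

/-- The parity (mod-2 sum) of all the bits of `x`. -/
def parityBool {ι : Type} [Fintype ι] [DecidableEq ι] (x : ι → Bool) : Bool :=
  decide ((Finset.univ.filter fun i => x i = true).card % 2 = 1)

/-! ## The probabilities `P_0(r)`, `P_1(r)` and `γ_d(r)` -/

/-- `P_0(r)`: the probability that `Ξ_t(r)` restricted by a random `p`-restriction is
the identically-`0` function. -/
noncomputable def Pzero (t : ℕ) (p : ℝ) (r : ℕ) : ℝ :=
  restrProb p (fun ρ : XiVars t r → Option Bool => ∀ x, restrictFun (Xi t r) ρ x = false)

/-- `P_1(r)`: the probability that `Ξ_t(r)` restricted by a random `p`-restriction is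
the identically-`1` function. -/
noncomputable def Pone (t : ℕ) (p : ℝ) (r : ℕ) : ℝ :=
  restrProb p (fun ρ : XiVars t r → Option Bool => ∀ x, restrictFun (Xi t r) ρ x = true)

/-- `γ_d(r) = Pr_ρ[DT_depth(Ξ_t(r)|_ρ) ≥ d]` for a random `p`-restriction `ρ`. -/
noncomputable def gammaDT (t : ℕ) (p : ℝ) (d r : ℕ) : ℝ :=
  restrProb p (fun ρ : XiVars t r → Option Bool => d ≤ DTdepth (restrictFun (Xi t r) ρ))

/-! ## The polynomial sequences `P_0(r), P_1(r) ∈ ℝ[p]` -/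

/-- The polynomial `q = (1 − p)/2 ∈ ℝ[p]`. -/
noncomputable def qP : Polynomial ℝ := Polynomial.C (1 / 2) * (1 - Polynomial.X)

/-- The pair of polynomials `(P_0(r), P_1(r)) ∈ ℝ[p] × ℝ[p]`, defined by
`P_0(1) = q^t`, `P_1(1) = 1 − (1−q)^t`, and for `r ≥ 2`, with `U = P_1(r−1)` and
`V = P_0(r−1)`: `P_0(r) = q·U·∑_{k=0}^{t−1}(q+pU)^k + (q+pU)^t` and
`P_1(r) = q·V·∑_{k=0}^{t−1}(q+pV)^k`.  (The value at `r = 0` is junk.) -/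
noncomputable def PP (t : ℕ) : ℕ → Polynomial ℝ × Polynomial ℝ
  | 0 => (1, 0)
  | 1 => (qP ^ t, 1 - (1 - qP) ^ t)
  | r + 2 =>
      (qP * (PP t (r + 1)).2 *
          (∑ k ∈ Finset.range t, (qP + Polynomial.X * (PP t (r + 1)).2) ^ k) +
        (qP + Polynomial.X * (PP t (r + 1)).2) ^ t,
       qP * (PP t (r + 1)).1 *
          (∑ k ∈ Finset.range t, (qP + Polynomial.X * (PP t (r + 1)).1) ^ k))

/-- The polynomial `P_0(r) ∈ ℝ[p]`. -/
noncomputable def P0poly (t r : ℕ) : Polynomial ℝ := (PP t r).1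

/-- The polynomial `P_1(r) ∈ ℝ[p]`. -/
noncomputable def P1poly (t r : ℕ) : Polynomial ℝ := (PP t r).2



open Finset

noncomputable def wgt (p : ℝ) (o : Option Bool) : ℝ := if o = none then p else (1 - p) / 2

open Classical in
lemma restrProb_eq {ι : Type} [Fintype ι] [DecidableEq ι] (p : ℝ) (E : (ι → Option Bool) → Prop) :
    restrProb p E = ∑ ρ : ι → Option Bool, (if E ρ then ∏ i, wgt p (ρ i) else 0) := rfl

lemma sum_wgt (p : ℝ) : ∑ o : Option Bool, wgt p o = 1 := by
  simp [wgt, Fintype.sum_option]; ring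

/-- sum over functions of products = product of sums -/
lemma sum_fun_prod {κ γ : Type} [Fintype κ] [DecidableEq κ] [Fintype γ] [DecidableEq γ]
    (F : κ → γ → ℝ) :
    ∑ f : κ → γ, ∏ k, F k (f k) = ∏ k, ∑ s, F k s := (Fintype.prod_sum F).symm

lemma sum_wgt_fun {ι : Type} [Fintype ι] [DecidableEq ι] (p : ℝ) :
    ∑ ρ : ι → Option Bool, ∏ i, wgt p (ρ i) = 1 := by
  rw [sum_fun_prod]
  exact Finset.prod_eq_one fun k _ => sum_wgt p

lemma restrProb_eq' {ι : Type} [Fintype ι] [DecidableEq ι] (p : ℝ)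
    (E : (ι → Option Bool) → Prop) [DecidablePred E] :
    restrProb p E = ∑ ρ : ι → Option Bool, (if E ρ then ∏ i, wgt p (ρ i) else 0) := by
  rw [restrProb_eq]
  exact Finset.sum_congr rfl fun ρ _ => by split_ifs with h1 h2 h2 <;> first | rfl | tauto

lemma find?_finRange_eq_some_iff : ∀ {t : ℕ} (pred : Fin t → Bool) (k : Fin t),
    (List.finRange t).find? pred = some k ↔ pred k = true ∧ ∀ j, j < k → pred j = false := by
  intro t
  induction t with
  | zero => exact fun _ k => k.elim0
  | succ t ih =>
    intro pred k
    rw [List.finRange_succ]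
    by_cases h0 : pred 0 = true
    · rw [List.find?_cons_of_pos h0]
      constructor
      · rintro h
        obtain rfl : (0 : Fin (t+1)) = k := Option.some_inj.mp h
        exact ⟨h0, fun j hj => absurd hj (Fin.not_lt_zero j)⟩
      · rintro ⟨hk, hlt⟩
        by_cases hk0 : k = 0
        · simp [hk0]
        · exact absurd (hlt 0 (Fin.pos_iff_ne_zero.2 hk0)) (by simp [h0])
    · simp only [Bool.not_eq_true] at h0
      rw [List.find?_cons_of_neg (by simp [h0]), List.find?_map]
      constructor
      · intro h
        obtain ⟨k', hk', rfl⟩ : ∃ k', (List.finRange t).find? (pred ∘ Fin.succ) = some k' ∧ k'.succ = k := by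
          cases hfind : (List.finRange t).find? (pred ∘ Fin.succ) with
          | none => rw [hfind] at h; simp at h
          | some k' => rw [hfind] at h; simp at h; exact ⟨k', rfl, h⟩
        obtain ⟨h1, h2⟩ := (ih _ _).1 hk'
        refine ⟨h1, fun j hj => ?_⟩
        rcases Fin.eq_zero_or_eq_succ j with rfl | ⟨j', rfl⟩
        · exact h0
        · exact h2 j' (by simpa [Fin.succ_lt_succ_iff] using hj)
      · rintro ⟨hk, hlt⟩
        rcases Fin.eq_zero_or_eq_succ k with rfl | ⟨k', rfl⟩
        · exact absurd hk (by simp [h0])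
        · have : (List.finRange t).find? (pred ∘ Fin.succ) = some k' :=
            (ih _ _).2 ⟨hk, fun j hj => hlt j.succ (by simpa [Fin.succ_lt_succ_iff] using hj)⟩
          simp [this, ← Function.comp_def]

lemma find?_finRange_eq_none_iff {t : ℕ} (pred : Fin t → Bool) :
    (List.finRange t).find? pred = none ↔ ∀ j, pred j = false := by
  rw [List.find?_eq_none]
  simp

/-- `k` can be the first-true block index under block assignment `a`. -/
def Ach {t : ℕ} (a : Fin t → Option Bool) (k : Fin t) : Prop :=
  a k ≠ some false ∧ ∀ j, j < k → a j ≠ some true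

instance {t : ℕ} (a : Fin t → Option Bool) (k : Fin t) : Decidable (Ach a k) := by
  unfold Ach; infer_instance

section Events
variable {t n : ℕ}

/-- block part of a restriction on `XiVars t (n+1)` -/
def blk (ρ : XiVars t (n+1) → Option Bool) : Fin t → Option Bool := fun i => ρ (Sum.inl i)

/-- subcopy part of a restriction on `XiVars t (n+1)` -/
def subr (ρ : XiVars t (n+1) → Option Bool) (k : Fin t) : XiVars t n → Option Bool :=
  fun v => ρ (Sum.inr (k, v))

lemma xi_succ_some (x : XiVars t (n+1) → Bool) {k : Fin t}
    (h : (List.finRange t).find? (fun i => x (Sum.inl i)) = some k) :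
    Xi t (n+1) x = ! Xi t n (fun v => x (Sum.inr (k, v))) := by
  show (match (List.finRange t).find? (fun i => x (Sum.inl i)) with
    | none => false
    | some k => ! Xi t n (fun v => x (Sum.inr (k, v)))) = _
  rw [h]

lemma xi_succ_none (x : XiVars t (n+1) → Bool)
    (h : (List.finRange t).find? (fun i => x (Sum.inl i)) = none) :
    Xi t (n+1) x = false := by
  show (match (List.finRange t).find? (fun i => x (Sum.inl i)) with
    | none => false
    | some k => ! Xi t n (fun v => x (Sum.inr (k, v)))) = _
  rw [h]

/-- the canonical witness input that routes to subcopy `k` and feeds it `z` -/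
def wit {t n : ℕ} (k : Fin t) (z : XiVars t n → Bool) : XiVars t (n+1) → Bool :=
  Sum.elim (fun j => decide (j = k)) (fun q => z q.2)

lemma wit_find {t n : ℕ} (ρ : XiVars t (n+1) → Option Bool) (k : Fin t)
    (z : XiVars t n → Bool) (hk : Ach (blk ρ) k) :
    (List.finRange t).find?
      (fun i => ((fun v => (ρ v).getD (wit k z v)) (Sum.inl i))) = some k := by
  apply (find?_finRange_eq_some_iff _ _).2
  constructor
  · rcases hak : ρ (Sum.inl k) with _ | b
    · simp [wit, hak]
    · cases b
      · exact absurd hak hk.1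
      · simp [hak]
  · intro j hj
    rcases haj : ρ (Sum.inl j) with _ | b
    · simp only [wit, haj, Option.getD_none, Sum.elim_inl, decide_eq_false_iff_not]
      exact Fin.ne_of_lt hj
    · cases b
      · simp [haj]
      · exact absurd haj (hk.2 j hj)

lemma eventZero_iff (ρ : XiVars t (n+1) → Option Bool) :
    (∀ x, restrictFun (Xi t (n+1)) ρ x = false) ↔
      ∀ k, Ach (blk ρ) k → ∀ z, restrictFun (Xi t n) (subr ρ k) z = true := by
  constructor
  · intro H k hk z
    have hres : Xi t (n+1) (fun v => (ρ v).getD (wit k z v)) = false := H (wit k z)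
    rw [xi_succ_some _ (wit_find ρ k z hk)] at hres
    have : Xi t n (fun v => (subr ρ k v).getD (z v)) = false → False := by
      intro h
      rw [show Xi t n (fun v => ((fun v => (ρ v).getD (wit k z v)) (Sum.inr (k, v)))) = false
        from h] at hres
      simp at hres
    show Xi t n (fun v => (subr ρ k v).getD (z v)) = true
    by_contra hc
    exact this (by simpa using hc)
  · intro H x
    show Xi t (n+1) (fun v => (ρ v).getD (x v)) = false
    rcases hf : (List.finRange t).find?
        (fun i => ((fun v => (ρ v).getD (x v)) (Sum.inl i))) with _ | k
    · exact xi_succ_none _ hf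
    · obtain ⟨h1, h2⟩ := (find?_finRange_eq_some_iff _ _).1 hf
      have hach : Ach (blk ρ) k := by
        constructor
        · intro hc
          simp only [blk] at hc
          simp [hc] at h1
        · intro j hj hc
          have := h2 j hj
          simp only [blk] at hc
          simp [hc] at this
      rw [xi_succ_some _ hf]
      have h3 : Xi t n (fun v => (ρ (Sum.inr (k, v))).getD (x (Sum.inr (k, v)))) = true :=
        H k hach (fun v => x (Sum.inr (k, v)))
      simpa using h3

lemma eventOne_iff (ρ : XiVars t (n+1) → Option Bool) :
    (∀ x, restrictFun (Xi t (n+1)) ρ x = true) ↔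
      (∃ j, blk ρ j = some true) ∧
        ∀ k, Ach (blk ρ) k → ∀ z, restrictFun (Xi t n) (subr ρ k) z = false := by
  constructor
  · intro H
    constructor
    · by_contra hc
      push_neg at hc
      have hres : Xi t (n+1) (fun v => (ρ v).getD ((fun _ => false) v)) = true :=
        H (fun _ => false)
      rw [xi_succ_none] at hres
      · simp at hres
      · rw [find?_finRange_eq_none_iff]
        intro j
        rcases haj : ρ (Sum.inl j) with _ | b
        · simp [haj]
        · cases b
          · simp [haj]
          · exact absurd haj (hc j)
    · intro k hk z
      have hres : Xi t (n+1) (fun v => (ρ v).getD (wit k z v)) = true := H (wit k z)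
      rw [xi_succ_some _ (wit_find ρ k z hk)] at hres
      show Xi t n (fun v => (subr ρ k v).getD (z v)) = false
      by_contra hc
      rw [show Xi t n (fun v => ((fun v => (ρ v).getD (wit k z v)) (Sum.inr (k, v)))) = true
        from by simpa [subr, wit] using hc] at hres
      simp at hres
  · rintro ⟨⟨j0, hj0⟩, H⟩ x
    show Xi t (n+1) (fun v => (ρ v).getD (x v)) = true
    rcases hf : (List.finRange t).find?
        (fun i => ((fun v => (ρ v).getD (x v)) (Sum.inl i))) with _ | k
    · exfalso
      have := (find?_finRange_eq_none_iff _).1 hf j0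
      simp only [blk] at hj0
      simp [hj0] at this
    · obtain ⟨h1, h2⟩ := (find?_finRange_eq_some_iff _ _).1 hf
      have hach : Ach (blk ρ) k := by
        constructor
        · intro hc
          simp only [blk] at hc
          simp [hc] at h1
        · intro j hj hc
          have := h2 j hj
          simp only [blk] at hc
          simp [hc] at this
      rw [xi_succ_some _ hf]
      have h3 : Xi t n (fun v => (ρ (Sum.inr (k, v))).getD (x (Sum.inr (k, v)))) = false :=
        H k hach (fun v => x (Sum.inr (k, v)))
      simpa using h3

end Events

section Sums

variable (t n : ℕ)

/-- restrictions on `XiVars t (n+1)` as pairs (block part, subcopy parts) -/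
def asmEquiv : ((Fin t → Option Bool) × (Fin t → XiVars t n → Option Bool)) ≃
    (XiVars t (n+1) → Option Bool) where
  toFun := fun q => Sum.elim q.1 (fun w => q.2 w.1 w.2)
  invFun := fun ρ => (fun i => ρ (Sum.inl i), fun k v => ρ (Sum.inr (k, v)))
  left_inv := fun q => rfl
  right_inv := fun ρ => funext fun v =>
    match v with
    | .inl _ => rfl
    | .inr (_, _) => rfl

lemma blk_asmEquiv (a : Fin t → Option Bool) (σ : Fin t → XiVars t n → Option Bool) :
    blk (asmEquiv t n (a, σ)) = a := rfl

lemma subr_asmEquiv (a : Fin t → Option Bool) (σ : Fin t → XiVars t n → Option Bool)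
    (k : Fin t) : subr (asmEquiv t n (a, σ)) k = σ k := rfl

lemma prod_xivars_succ (g : XiVars t (n+1) → ℝ) :
    ∏ v, g v =
      (∏ i : Fin t, g (Sum.inl i)) * ∏ k : Fin t, ∏ w : XiVars t n, g (Sum.inr (k, w)) := by
  have h := Fintype.prod_sum_type (fun v : Fin t ⊕ (Fin t × XiVars t n) => g v)
  rw [Fintype.prod_prod_type] at h
  exact h

lemma ite_all_prod {κ : Type} [Fintype κ] (P : κ → Prop) [DecidablePred P]
    [Decidable (∀ k, P k)] (g : κ → ℝ) :
    (if (∀ k, P k) then ∏ k, g k else 0) = ∏ k, (if P k then g k else 0) := by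
  by_cases h : ∀ k, P k
  · rw [if_pos h]
    exact Finset.prod_congr rfl fun k _ => (if_pos (h k)).symm
  · rw [if_neg h]
    push_neg at h
    obtain ⟨k0, hk0⟩ := h
    symm
    apply Finset.prod_eq_zero (Finset.mem_univ k0)
    exact if_neg hk0

variable (p : ℝ)

lemma prod_wgt_asm (a : Fin t → Option Bool) (σ : Fin t → XiVars t n → Option Bool) :
    ∏ v, wgt p ((asmEquiv t n (a, σ)) v) =
      (∏ i, wgt p (a i)) * ∏ k, ∏ w, wgt p (σ k w) := by
  rw [prod_xivars_succ]
  rfl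

lemma inner_eval0 (a : Fin t → Option Bool) (k : Fin t) :
    (∑ s : XiVars t n → Option Bool,
      if (Ach a k → ∀ z, restrictFun (Xi t n) s z = true) then ∏ w, wgt p (s w) else 0) =
      if Ach a k then Pone t p n else 1 := by
  by_cases h : Ach a k
  · rw [if_pos h, show Pone t p n = _ from restrProb_eq' p _]
    exact Finset.sum_congr rfl fun s _ => if_congr (imp_iff_right h) rfl rfl
  · rw [if_neg h, Finset.sum_congr rfl
      (fun (s : XiVars t n → Option Bool) _ => if_pos (fun hh => absurd hh h)),
      sum_wgt_fun]

lemma inner_eval1 (a : Fin t → Option Bool) (k : Fin t) :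
    (∑ s : XiVars t n → Option Bool,
      if (Ach a k → ∀ z, restrictFun (Xi t n) s z = false) then ∏ w, wgt p (s w) else 0) =
      if Ach a k then Pzero t p n else 1 := by
  by_cases h : Ach a k
  · rw [if_pos h, show Pzero t p n = _ from restrProb_eq' p _]
    exact Finset.sum_congr rfl fun s _ => if_congr (imp_iff_right h) rfl rfl
  · rw [if_neg h, Finset.sum_congr rfl
      (fun (s : XiVars t n → Option Bool) _ => if_pos (fun hh => absurd hh h)),
      sum_wgt_fun]

lemma pzero_succ :
    Pzero t p (n+1) =
      ∑ a : Fin t → Option Bool,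
        (∏ i, wgt p (a i)) * ∏ k, (if Ach a k then Pone t p n else 1) := by
  rw [show Pzero t p (n+1) = _ from restrProb_eq' p _, ← Equiv.sum_comp (asmEquiv t n),
    Fintype.sum_prod_type]
  refine Finset.sum_congr rfl fun a _ => ?_
  have key : ∀ σ : Fin t → XiVars t n → Option Bool,
      (if (∀ x, restrictFun (Xi t (n+1)) (asmEquiv t n (a, σ)) x = false)
        then ∏ v, wgt p ((asmEquiv t n (a, σ)) v) else 0) =
      (∏ i, wgt p (a i)) *
        ∏ k, (if (Ach a k → ∀ z, restrictFun (Xi t n) (σ k) z = true)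
          then ∏ w, wgt p (σ k w) else 0) := by
    intro σ
    by_cases hC : ∀ k, Ach a k → ∀ z, restrictFun (Xi t n) (σ k) z = true
    · rw [if_pos ((eventZero_iff (asmEquiv t n (a, σ))).mpr hC), prod_wgt_asm]
      exact congrArg ((∏ i, wgt p (a i)) * ·)
        (Finset.prod_congr rfl fun k _ => (if_pos (hC k)).symm)
    · rw [if_neg (fun hC' => hC ((eventZero_iff (asmEquiv t n (a, σ))).mp hC'))]
      symm
      push_neg at hC
      obtain ⟨k0, hA, z, hz⟩ := hC
      rw [mul_eq_zero]
      right
      exact Finset.prod_eq_zero (Finset.mem_univ k0)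
        (if_neg (by push_neg; exact ⟨hA, z, hz⟩))
  calc ∑ σ : Fin t → XiVars t n → Option Bool,
        (if (∀ x, restrictFun (Xi t (n+1)) (asmEquiv t n (a, σ)) x = false)
          then ∏ v, wgt p ((asmEquiv t n (a, σ)) v) else 0)
      = ∑ σ : Fin t → XiVars t n → Option Bool, (∏ i, wgt p (a i)) *
          ∏ k, (if (Ach a k → ∀ z, restrictFun (Xi t n) (σ k) z = true)
            then ∏ w, wgt p (σ k w) else 0) := Finset.sum_congr rfl fun σ _ => key σ
    _ = (∏ i, wgt p (a i)) * ∑ σ : Fin t → XiVars t n → Option Bool,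
          ∏ k, (if (Ach a k → ∀ z, restrictFun (Xi t n) (σ k) z = true)
            then ∏ w, wgt p (σ k w) else 0) := by rw [Finset.mul_sum]
    _ = (∏ i, wgt p (a i)) * ∏ k, ∑ s : XiVars t n → Option Bool,
          (if (Ach a k → ∀ z, restrictFun (Xi t n) s z = true)
            then ∏ w, wgt p (s w) else 0) := by
        rw [sum_fun_prod (fun k s => if (Ach a k → ∀ z, restrictFun (Xi t n) s z = true)
          then ∏ w, wgt p (s w) else 0)]
    _ = _ := by rw [Finset.prod_congr rfl fun k _ => inner_eval0 t n p a k]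

lemma pone_succ :
    Pone t p (n+1) =
      ∑ a : Fin t → Option Bool,
        (if (∃ j, a j = some true) then
          (∏ i, wgt p (a i)) * ∏ k, (if Ach a k then Pzero t p n else 1) else 0) := by
  rw [show Pone t p (n+1) = _ from restrProb_eq' p _, ← Equiv.sum_comp (asmEquiv t n),
    Fintype.sum_prod_type]
  refine Finset.sum_congr rfl fun a _ => ?_
  have key : ∀ σ : Fin t → XiVars t n → Option Bool,
      (if (∀ x, restrictFun (Xi t (n+1)) (asmEquiv t n (a, σ)) x = true)
        then ∏ v, wgt p ((asmEquiv t n (a, σ)) v) else 0) =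
      (if (∃ j, a j = some true) then
        (∏ i, wgt p (a i)) *
          ∏ k, (if (Ach a k → ∀ z, restrictFun (Xi t n) (σ k) z = false)
            then ∏ w, wgt p (σ k w) else 0) else 0) := by
    intro σ
    by_cases hex : ∃ j, a j = some true
    · by_cases hC : ∀ k, Ach a k → ∀ z, restrictFun (Xi t n) (σ k) z = false
      · rw [if_pos ((eventOne_iff (asmEquiv t n (a, σ))).mpr ⟨hex, hC⟩), prod_wgt_asm,
          if_pos hex]
        exact congrArg ((∏ i, wgt p (a i)) * ·)
          (Finset.prod_congr rfl fun k _ => (if_pos (hC k)).symm)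
      · rw [if_neg (fun hC' => hC ((eventOne_iff (asmEquiv t n (a, σ))).mp hC').2),
          if_pos hex]
        symm
        push_neg at hC
        obtain ⟨k0, hA, z, hz⟩ := hC
        rw [mul_eq_zero]
        right
        exact Finset.prod_eq_zero (Finset.mem_univ k0)
          (if_neg (by push_neg; exact ⟨hA, z, hz⟩))
    · rw [if_neg (fun hC' => hex ((eventOne_iff (asmEquiv t n (a, σ))).mp hC').1),
        if_neg hex]
  calc ∑ σ : Fin t → XiVars t n → Option Bool,
        (if (∀ x, restrictFun (Xi t (n+1)) (asmEquiv t n (a, σ)) x = true)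
          then ∏ v, wgt p ((asmEquiv t n (a, σ)) v) else 0)
      = ∑ σ : Fin t → XiVars t n → Option Bool,
          (if (∃ j, a j = some true) then
            (∏ i, wgt p (a i)) *
              ∏ k, (if (Ach a k → ∀ z, restrictFun (Xi t n) (σ k) z = false)
                then ∏ w, wgt p (σ k w) else 0) else 0) :=
        Finset.sum_congr rfl fun σ _ => key σ
    _ = _ := by
        by_cases hex : ∃ j, a j = some true
        · rw [if_pos hex, Finset.sum_congr rfl
            (fun (σ : Fin t → XiVars t n → Option Bool) _ => if_pos hex),
            ← Finset.mul_sum,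
            sum_fun_prod (fun k s => if (Ach a k → ∀ z, restrictFun (Xi t n) s z = false)
              then ∏ w, wgt p (s w) else 0),
            Finset.prod_congr rfl fun k _ => inner_eval1 t n p a k]
        · rw [if_neg hex]
          exact Finset.sum_eq_zero fun σ _ => if_neg hex

end Sums

section Block

lemma ach_cons_zero {m : ℕ} (o : Option Bool) (a : Fin m → Option Bool) :
    Ach (Fin.cons o a) 0 ↔ o ≠ some false := by
  constructor
  · exact fun h => by simpa using h.1
  · exact fun h => ⟨by simpa using h, fun j hj => absurd hj (Fin.not_lt_zero j)⟩

lemma ach_cons_succ {m : ℕ} (o : Option Bool) (a : Fin m → Option Bool) (j : Fin m) :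
    Ach (Fin.cons o a) j.succ ↔ (o ≠ some true ∧ Ach a j) := by
  constructor
  · rintro ⟨h1, h2⟩
    refine ⟨by simpa using h2 0 (Fin.succ_pos j), by simpa using h1, fun j' hj' => ?_⟩
    have := h2 j'.succ (by simpa [Fin.succ_lt_succ_iff] using hj')
    simpa using this
  · rintro ⟨h0, h1, h2⟩
    refine ⟨by simpa using h1, fun j' hj' => ?_⟩
    rcases Fin.eq_zero_or_eq_succ j' with rfl | ⟨j'', rfl⟩
    · simpa using h0
    · have : j'' < j := by simpa [Fin.succ_lt_succ_iff] using hj'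
      simpa using h2 j'' this

noncomputable def S0 (p U : ℝ) (m : ℕ) : ℝ :=
  ∑ a : Fin m → Option Bool, (∏ i, wgt p (a i)) * ∏ k, (if Ach a k then U else 1)

noncomputable def S1 (p V : ℝ) (m : ℕ) : ℝ :=
  ∑ a : Fin m → Option Bool,
    (if (∃ j, a j = some true) then
      (∏ i, wgt p (a i)) * ∏ k, (if Ach a k then V else 1) else 0)

lemma S0_succ (p U : ℝ) (m : ℕ) :
    S0 p U (m+1) = ((1-p)/2) * U + ((1-p)/2) * S0 p U m + p * U * S0 p U m := by
  have hN : ∀ a : Fin m → Option Bool,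
      (∏ i : Fin (m+1), wgt p ((Fin.cons (none : Option Bool) a : Fin (m+1) → Option Bool) i)) *
        (∏ k : Fin (m+1), if Ach (Fin.cons (none : Option Bool) a) k then U else 1) =
      p * U * ((∏ i, wgt p (a i)) * ∏ k, (if Ach a k then U else 1)) := by
    intro a
    rw [Fin.prod_univ_succ, Fin.prod_univ_succ]
    simp only [Fin.cons_zero, Fin.cons_succ]
    rw [if_pos ((ach_cons_zero none a).mpr (by simp)),
      Finset.prod_congr rfl (fun j _ => if_congr
        ((ach_cons_succ none a j).trans (and_iff_right (by simp))) rfl rfl)]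
    show (wgt p none * _) * _ = _
    rw [show wgt p none = p from rfl]
    ring
  have hT : ∀ a : Fin m → Option Bool,
      (∏ i : Fin (m+1), wgt p ((Fin.cons (some true : Option Bool) a : Fin (m+1) → Option Bool) i)) *
        (∏ k : Fin (m+1), if Ach (Fin.cons (some true : Option Bool) a) k then U else 1) =
      ((1-p)/2) * U * (∏ i, wgt p (a i)) := by
    intro a
    rw [Fin.prod_univ_succ, Fin.prod_univ_succ]
    simp only [Fin.cons_zero, Fin.cons_succ]
    rw [if_pos ((ach_cons_zero (some true) a).mpr (by simp)),
      Finset.prod_congr rfl (fun j _ => if_neg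
        (fun hc => by simpa using ((ach_cons_succ (some true) a j).mp hc).1)),
      Finset.prod_const_one]
    show (wgt p (some true) * _) * _ = _
    rw [show wgt p (some true) = (1-p)/2 from rfl]
    ring
  have hF : ∀ a : Fin m → Option Bool,
      (∏ i : Fin (m+1), wgt p ((Fin.cons (some false : Option Bool) a : Fin (m+1) → Option Bool) i)) *
        (∏ k : Fin (m+1), if Ach (Fin.cons (some false : Option Bool) a) k then U else 1) =
      ((1-p)/2) * ((∏ i, wgt p (a i)) * ∏ k, (if Ach a k then U else 1)) := by
    intro a
    rw [Fin.prod_univ_succ, Fin.prod_univ_succ]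
    simp only [Fin.cons_zero, Fin.cons_succ]
    rw [if_neg (fun hc => (ach_cons_zero (some false) a).mp hc rfl),
      Finset.prod_congr rfl (fun j _ => if_congr
        ((ach_cons_succ (some false) a j).trans (and_iff_right (by simp))) rfl rfl)]
    show (wgt p (some false) * _) * (1 * _) = _
    rw [show wgt p (some false) = (1-p)/2 from rfl]
    ring
  show (∑ a : Fin (m+1) → Option Bool,
      (∏ i, wgt p (a i)) * ∏ k, (if Ach a k then U else 1)) = _
  rw [← Equiv.sum_comp (Fin.consEquiv (fun _ : Fin (m+1) => Option Bool)),
    Fintype.sum_prod_type, Fintype.sum_option, Fintype.sum_bool]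
  simp only [show ∀ (o : Option Bool) (y : Fin m → Option Bool),
      (Fin.consEquiv fun _ : Fin (m+1) => Option Bool) (o, y) = Fin.cons o y
    from fun _ _ => rfl]
  rw [Finset.sum_congr rfl fun a _ => hN a, Finset.sum_congr rfl fun a _ => hT a,
    Finset.sum_congr rfl fun a _ => hF a, ← Finset.mul_sum, ← Finset.mul_sum, ← Finset.mul_sum,
    sum_wgt_fun]
  show p * U * S0 p U m + (((1-p)/2) * U * 1 + ((1-p)/2) * S0 p U m) = _
  ring

lemma S1_succ (p V : ℝ) (m : ℕ) :
    S1 p V (m+1) = ((1-p)/2) * V + ((1-p)/2) * S1 p V m + p * V * S1 p V m := by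
  have hN : ∀ a : Fin m → Option Bool,
      (if (∃ j : Fin (m+1), (Fin.cons (none : Option Bool) a : Fin (m+1) → Option Bool) j = some true) then
        (∏ i : Fin (m+1), wgt p ((Fin.cons (none : Option Bool) a : Fin (m+1) → Option Bool) i)) *
          ∏ k : Fin (m+1), (if Ach (Fin.cons (none : Option Bool) a) k then V else 1) else 0) =
      p * V * (if (∃ j, a j = some true) then
        (∏ i, wgt p (a i)) * ∏ k, (if Ach a k then V else 1) else 0) := by
    intro a
    have hiff : (∃ j : Fin (m+1), (Fin.cons (none : Option Bool) a : Fin (m+1) → Option Bool) j = some true) ↔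
        (∃ j, a j = some true) := by
      constructor
      · rintro ⟨j, hj⟩
        rcases Fin.eq_zero_or_eq_succ j with rfl | ⟨j', rfl⟩
        · simp at hj
        · exact ⟨j', by simpa using hj⟩
      · rintro ⟨j, hj⟩
        exact ⟨j.succ, by simpa using hj⟩
    by_cases hex : ∃ j, a j = some true
    · rw [if_pos (hiff.mpr hex), if_pos hex]
      rw [Fin.prod_univ_succ, Fin.prod_univ_succ]
      simp only [Fin.cons_zero, Fin.cons_succ]
      rw [if_pos ((ach_cons_zero none a).mpr (by simp)),
        Finset.prod_congr rfl (fun j _ => if_congr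
          ((ach_cons_succ none a j).trans (and_iff_right (by simp))) rfl rfl)]
      show (wgt p none * _) * _ = _
      rw [show wgt p none = p from rfl]
      ring
    · rw [if_neg (fun hc => hex (hiff.mp hc)), if_neg hex, mul_zero]
  have hT : ∀ a : Fin m → Option Bool,
      (if (∃ j : Fin (m+1), (Fin.cons (some true : Option Bool) a : Fin (m+1) → Option Bool) j = some true) then
        (∏ i : Fin (m+1), wgt p ((Fin.cons (some true : Option Bool) a : Fin (m+1) → Option Bool) i)) *
          ∏ k : Fin (m+1), (if Ach (Fin.cons (some true : Option Bool) a) k then V else 1) else 0) =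
      ((1-p)/2) * V * (∏ i, wgt p (a i)) := by
    intro a
    rw [if_pos ⟨0, by simp⟩]
    rw [Fin.prod_univ_succ, Fin.prod_univ_succ]
    simp only [Fin.cons_zero, Fin.cons_succ]
    rw [if_pos ((ach_cons_zero (some true) a).mpr (by simp)),
      Finset.prod_congr rfl (fun j _ => if_neg
        (fun hc => by simpa using ((ach_cons_succ (some true) a j).mp hc).1)),
      Finset.prod_const_one]
    show (wgt p (some true) * _) * _ = _
    rw [show wgt p (some true) = (1-p)/2 from rfl]
    ring
  have hF : ∀ a : Fin m → Option Bool,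
      (if (∃ j : Fin (m+1), (Fin.cons (some false : Option Bool) a : Fin (m+1) → Option Bool) j = some true) then
        (∏ i : Fin (m+1), wgt p ((Fin.cons (some false : Option Bool) a : Fin (m+1) → Option Bool) i)) *
          ∏ k : Fin (m+1), (if Ach (Fin.cons (some false : Option Bool) a) k then V else 1) else 0) =
      ((1-p)/2) * (if (∃ j, a j = some true) then
        (∏ i, wgt p (a i)) * ∏ k, (if Ach a k then V else 1) else 0) := by
    intro a
    have hiff : (∃ j : Fin (m+1), (Fin.cons (some false : Option Bool) a : Fin (m+1) → Option Bool) j = some true) ↔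
        (∃ j, a j = some true) := by
      constructor
      · rintro ⟨j, hj⟩
        rcases Fin.eq_zero_or_eq_succ j with rfl | ⟨j', rfl⟩
        · simp at hj
        · exact ⟨j', by simpa using hj⟩
      · rintro ⟨j, hj⟩
        exact ⟨j.succ, by simpa using hj⟩
    by_cases hex : ∃ j, a j = some true
    · rw [if_pos (hiff.mpr hex), if_pos hex]
      rw [Fin.prod_univ_succ, Fin.prod_univ_succ]
      simp only [Fin.cons_zero, Fin.cons_succ]
      rw [if_neg (fun hc => (ach_cons_zero (some false) a).mp hc rfl),
        Finset.prod_congr rfl (fun j _ => if_congr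
          ((ach_cons_succ (some false) a j).trans (and_iff_right (by simp))) rfl rfl)]
      show (wgt p (some false) * _) * (1 * _) = _
      rw [show wgt p (some false) = (1-p)/2 from rfl]
      ring
    · rw [if_neg (fun hc => hex (hiff.mp hc)), if_neg hex, mul_zero]
  show (∑ a : Fin (m+1) → Option Bool,
      (if (∃ j, a j = some true) then
        (∏ i, wgt p (a i)) * ∏ k, (if Ach a k then V else 1) else 0)) = _
  rw [← Equiv.sum_comp (Fin.consEquiv (fun _ : Fin (m+1) => Option Bool)),
    Fintype.sum_prod_type, Fintype.sum_option, Fintype.sum_bool]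
  simp only [show ∀ (o : Option Bool) (y : Fin m → Option Bool),
      (Fin.consEquiv fun _ : Fin (m+1) => Option Bool) (o, y) = Fin.cons o y
    from fun _ _ => rfl]
  rw [Finset.sum_congr rfl fun a _ => hN a, Finset.sum_congr rfl fun a _ => hT a,
    Finset.sum_congr rfl fun a _ => hF a, ← Finset.mul_sum, ← Finset.mul_sum, ← Finset.mul_sum,
    sum_wgt_fun]
  show p * V * S1 p V m + (((1-p)/2) * V * 1 + ((1-p)/2) * S1 p V m) = _
  ring

lemma S0_zero (p U : ℝ) : S0 p U 0 = 1 := by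
  simp [S0]

lemma S1_zero (p V : ℝ) : S1 p V 0 = 0 := by
  simp [S1]

lemma S0_closed (p U : ℝ) : ∀ m, S0 p U m =
    ((1-p)/2 + p*U)^m + ((1-p)/2) * U * ∑ j ∈ Finset.range m, ((1-p)/2 + p*U)^j := by
  intro m
  induction m with
  | zero => simp [S0_zero]
  | succ m ih =>
    rw [S0_succ, ih, geom_sum_succ]
    ring

lemma S1_closed (p V : ℝ) : ∀ m, S1 p V m =
    ((1-p)/2) * V * ∑ j ∈ Finset.range m, ((1-p)/2 + p*V)^j := by
  intro m
  induction m with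
  | zero => simp [S1_zero]
  | succ m ih =>
    rw [S1_succ, ih, geom_sum_succ]
    ring

end Block

/-- the probabilities `P_0(r), P_1(r)` that `Ξ_t(r)|_ρ` is identically
`0` resp. `1` satisfy, for `r ≥ 2`, with `q = (1−p)/2`, `U = P_1(r−1)`, `V = P_0(r−1)`:
`P_0(r) = qU·∑_{k=0}^{t−1}(q+pU)^k + (q+pU)^t` and `P_1(r) = qV·∑_{k=0}^{t−1}(q+pV)^k`. -/
theorem xi_prob_recurrence (t : ℕ) (ht : 1 ≤ t) (p : ℝ) (hp0 : 0 ≤ p) (hp1 : p ≤ 1)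
    (r : ℕ) (hr : 2 ≤ r) :
    Pzero t p r =
        ((1 - p) / 2) * Pone t p (r - 1) *
            (∑ k ∈ Finset.range t, ((1 - p) / 2 + p * Pone t p (r - 1)) ^ k) +
          ((1 - p) / 2 + p * Pone t p (r - 1)) ^ t ∧
      Pone t p r =
        ((1 - p) / 2) * Pzero t p (r - 1) *
          (∑ k ∈ Finset.range t, ((1 - p) / 2 + p * Pzero t p (r - 1)) ^ k) := by
  obtain ⟨n, rfl⟩ : ∃ n, r = n + 2 := ⟨r - 2, by omega⟩
  have hsub : n + 2 - 1 = n + 1 := rfl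
  rw [hsub]
  constructor
  · rw [show Pzero t p (n+2) = S0 p (Pone t p (n+1)) t from pzero_succ t (n+1) p,
      S0_closed]
    ring
  · rw [show Pone t p (n+2) = S1 p (Pzero t p (n+1)) t from pone_succ t (n+1) p,
      S1_closed]
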